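/- Correctness of label dominance with respect to remaining fuel (justifying Definition 1, condition (ii)): let x be a plan that is feasible for initial fuel q, and let q' satisfy q ≤ q' ≤ Q. Then there exists a plan x' that is feasible for initial fuel q' such that 0 ≤ x' i ≤ x i for every i. Consequently cost x' ≤ cost x (since all prices are nonnegative), and every refuelling stop of x' is a refuelling stop of x, so x' uses no more refuelling stops than x. -/

import Mathlib

/-- Fuel level recursion on ℕ: level 0 is the initial fuel `q0`, and the level after
stop `i` is the previous level plus the refuel amount `x i` minus the consumption `d i`. -/
noncomputable def fuelNat (q0 : ℝ) (d x : ℕ → ℝ) : ℕ → ℝ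
  | 0 => q0
  | i + 1 => fuelNat q0 d x i + x i - d i

/-- Fuel levels `f : Fin (n+1) → ℝ` of a plan `x : Fin n → ℝ` with consumptions `d`,
initial fuel `q0`: `f 0 = q0` and `f (i+1) = f i + x i - d i`. -/
noncomputable def fuel {n : ℕ} (q0 : ℝ) (d x : Fin n → ℝ) (i : Fin (n + 1)) : ℝ :=
  fuelNat q0 (fun j => if h : j < n then d ⟨j, h⟩ else 0)
    (fun j => if h : j < n then x ⟨j, h⟩ else 0) i

/-- A plan `x` is feasible (for tank capacity `Q` and initial fuel `q0`) if for every stop `i`: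
`x i ≥ 0`, `f i + x i ≤ Q`, and `f (i+1) ≥ 0`. -/
def Feasible {n : ℕ} (Q q0 : ℝ) (d x : Fin n → ℝ) : Prop :=
  ∀ i : Fin n, 0 ≤ x i ∧ fuel q0 d x i.castSucc + x i ≤ Q ∧ 0 ≤ fuel q0 d x i.succ

/-- Cost of a plan: `Σ_i (c i) * (x i)`. -/
noncomputable def cost {n : ℕ} (c x : Fin n → ℝ) : ℝ := ∑ i, c i * x i

/-- Surplus recursion: `s 0 = s0`, `s (k+1) = max 0 (s k - xN k)`. -/
noncomputable def sAux (s0 : ℝ) (xN : ℕ → ℝ) : ℕ → ℝ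
  | 0 => s0
  | k + 1 => max 0 (sAux s0 xN k - xN k)

/-- dominance w.r.t. remaining fuel: if `x` is feasible for initial fuel `q`
and `q ≤ q' ≤ Q`, then there is a plan `x'` feasible for initial fuel `q'` with
`0 ≤ x' i ≤ x i` for every `i`; consequently `cost x' ≤ cost x`, every refuelling stop of
`x'` is one of `x`, and `x'` uses no more refuelling stops than `x`. -/
theorem dominance_more_fuel {n : ℕ} (Q : ℝ) (hQ : 0 < Q) (d c : Fin n → ℝ)
    (hd : ∀ i, 0 ≤ d i ∧ d i ≤ Q) (hc : ∀ i, 0 ≤ c i)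
    (q q' : ℝ) (hq : 0 ≤ q) (hqq' : q ≤ q') (hq' : q' ≤ Q)
    (x : Fin n → ℝ) (hx : Feasible Q q d x) :
    ∃ x' : Fin n → ℝ, Feasible Q q' d x' ∧
      (∀ i, 0 ≤ x' i ∧ x' i ≤ x i) ∧
      cost c x' ≤ cost c x ∧
      (∀ i, 0 < x' i → 0 < x i) ∧
      {i : Fin n | 0 < x' i}.ncard ≤ {i : Fin n | 0 < x i}.ncard := by
  classical
  set dN : ℕ → ℝ := fun j => if h : j < n then d ⟨j, h⟩ else 0 with hdN
  set xN : ℕ → ℝ := fun j => if h : j < n then x ⟨j, h⟩ else 0 with hxNdef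
  set sN : ℕ → ℝ := sAux (q' - q) xN with hsNdef
  have hdN0 : ∀ k, 0 ≤ dN k := by
    intro k; by_cases h : k < n
    · simpa [hdN, h] using (hd ⟨k, h⟩).1
    · simp [hdN, h]
  have hxN0 : ∀ k, 0 ≤ xN k := by
    intro k; by_cases h : k < n
    · simpa [hxNdef, h] using (hx ⟨k, h⟩).1
    · simp [hxNdef, h]
  have hs0 : ∀ k, 0 ≤ sN k := by
    intro k; cases k with
    | zero => simpa [hsNdef, sAux] using sub_nonneg.mpr hqq'
    | succ k => simp [hsNdef, sAux]
  set x' : Fin n → ℝ := fun i => x i - min (x i) (sN (i : ℕ)) with hx'def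
  set x'N : ℕ → ℝ := fun j => if h : j < n then x' ⟨j, h⟩ else 0 with hx'Ndef
  have hx'Neq : ∀ k, x'N k = xN k - min (xN k) (sN k) := by
    intro k; by_cases h : k < n
    · simp [hx'Ndef, hxNdef, hx'def, h]
    · simp [hx'Ndef, hxNdef, h, min_eq_left (hs0 k)]
  -- key relation between the fuel levels
  have key : ∀ k, fuelNat q' dN x'N k = fuelNat q dN xN k + sN k := by
    intro k; induction k with
    | zero => simp [fuelNat, hsNdef, sAux]
    | succ k ih =>
      have hmm : sN k - min (xN k) (sN k) = max 0 (sN k - xN k) := by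
        rcases le_total (sN k) (xN k) with h | h
        · rw [min_eq_right h, max_eq_left (by linarith)]; ring
        · rw [min_eq_left h, max_eq_right (by linarith)]
      have hsucc : sN (k + 1) = max 0 (sN k - xN k) := by simp [hsNdef, sAux]
      simp only [fuelNat, ih, hx'Neq, hsucc]
      rw [← hmm]; ring
  have hfuel : ∀ i : Fin (n + 1), fuel q d x i = fuelNat q dN xN (i : ℕ) := fun i => rfl
  have hfuel' : ∀ i : Fin (n + 1), fuel q' d x' i = fuelNat q' dN x'N (i : ℕ) := fun i => rfl
  -- fuel levels of x never exceed Q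
  have hfQ : ∀ k, fuelNat q dN xN k ≤ Q := by
    intro k; induction k with
    | zero => exact le_trans hqq' hq'
    | succ k ih =>
      by_cases h : k < n
      · have h2 := (hx ⟨k, h⟩).2.1
        have hcast : fuel q d x (Fin.castSucc ⟨k, h⟩) = fuelNat q dN xN k := hfuel _
        rw [hcast] at h2
        have hxk : xN k = x ⟨k, h⟩ := by simp [hxNdef, h]
        have := hdN0 k
        simp only [fuelNat]
        rw [hxk]; linarith
      · have hxk : xN k = 0 := by simp [hxNdef, h]
        have hdk : dN k = 0 := by simp [hdN, h]
        simp only [fuelNat, hxk, hdk]; linarith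
  -- fuel levels of x' never exceed Q
  have hfQ' : ∀ k, fuelNat q' dN x'N k ≤ Q := by
    intro k; induction k with
    | zero => exact hq'
    | succ k ih =>
      rcases le_total (sN k) (xN k) with h | h
      · have hsucc : sN (k + 1) = 0 := by
          simp [hsNdef, sAux, max_eq_left (by linarith : sN k - xN k ≤ 0)]
          exact h
        rw [key (k + 1), hsucc, add_zero]
        exact hfQ (k + 1)
      · have hx'k : x'N k = 0 := by rw [hx'Neq k, min_eq_left h]; ring
        simp only [fuelNat, hx'k]
        have := hdN0 k
        linarith
  have hbounds : ∀ i : Fin n, 0 ≤ x' i ∧ x' i ≤ x i := by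
    intro i
    constructor
    · simp only [hx'def]; have := min_le_left (x i) (sN (i : ℕ)); linarith
    · simp only [hx'def]
      have : 0 ≤ min (x i) (sN (i : ℕ)) := le_min (hx i).1 (hs0 _)
      linarith
  have hfeas : Feasible Q q' d x' := by
    intro i
    have hix : (Fin.castSucc i : ℕ) = (i : ℕ) := rfl
    have hisucc : (Fin.succ i : ℕ) = (i : ℕ) + 1 := rfl
    refine ⟨(hbounds i).1, ?_, ?_⟩
    · rw [hfuel', hix, key]
      have h2 := (hx i).2.1
      rw [hfuel, hix] at h2
      rcases le_total (sN (i : ℕ)) (x i) with h | h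
      · have : x' i = x i - sN (i : ℕ) := by rw [hx'def]; simp [min_eq_right h]
        rw [this]; linarith
      · have hx'i : x' i = 0 := by rw [hx'def]; simp [min_eq_left h]
        have := hfQ' (i : ℕ)
        rw [key] at this
        rw [hx'i]; linarith
    · rw [hfuel', hisucc, key]
      have h3 := (hx i).2.2
      rw [hfuel, hisucc] at h3
      have := hs0 ((i : ℕ) + 1)
      linarith
  refine ⟨x', hfeas, hbounds, ?_, ?_, ?_⟩
  · apply Finset.sum_le_sum
    intro i _
    exact mul_le_mul_of_nonneg_left (hbounds i).2 (hc i)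
  · intro i hi
    exact lt_of_lt_of_le hi (hbounds i).2
  · apply Set.ncard_le_ncard
    · intro i hi
      exact lt_of_lt_of_le hi (hbounds i).2
    · exact Set.toFinite _
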